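/- The ordinary generating function counting partial GDAP that never go below the line y = m (m <= 0 fixed) by length is (r^{-m} - r^{-1-m} - x^2)/x^3, where r = (1 + x - x^2 - sqrt(x^4 - 2x^3 - x^2 - 2x + 1))/(2x). In particular for m = -1 the series begins 1 + 2x + 4x^2 + 8x^3 + 17x^4 + 37x^5 + ... -/

import Mathlib

open PowerSeries

/-- A valid step sequence: each step is an up-step `1` or a down-step `-k` (`k ≥ 1`),
and no two down-steps are consecutive. -/
def GoodSteps (p : List ℤ) : Prop :=
  (∀ s ∈ p, s = 1 ∨ s ≤ -1) ∧ List.Chain' (fun a b => a = 1 ∨ b = 1) p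

/-- A Dyck path with air pockets: nonempty, valid steps, ends on the x-axis,
stays weakly above the x-axis. -/
def IsDAP (p : List ℤ) : Prop :=
  p ≠ [] ∧ GoodSteps p ∧ p.sum = 0 ∧ ∀ i, 0 ≤ (p.take i).sum

/-- A grand Dyck path with air pockets: valid steps, ends on the x-axis
(possibly going below it); the empty path is allowed. -/
def IsGDAP (p : List ℤ) : Prop := GoodSteps p ∧ p.sum = 0

/-- Number of DAP of length `n`. -/
noncomputable def dapCount (n : ℕ) : ℕ :=
  Nat.card {p : List ℤ // IsDAP p ∧ p.length = n}

/-- The path never goes strictly below the line `y = m`. -/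
def BoundedBelow (m : ℤ) (p : List ℤ) : Prop := ∀ i, m ≤ (p.take i).sum

/-- Number of partial GDAP of length `n` that never go below `y = m`. -/
noncomputable def partialCount (m : ℤ) (n : ℕ) : ℕ :=
  Nat.card {p : List ℤ // GoodSteps p ∧ BoundedBelow m p ∧ p.length = n}

noncomputable def partialSeries (m : ℤ) : PowerSeries ℚ :=
  PowerSeries.mk fun n => (partialCount m n : ℚ)

/-- the o.g.f. of partial GDAP above `y = m` equals
`(r^{-m} - r^{-1-m} - x²)/x³`, where `r = (1+x-x²-√(x⁴-2x³-x²-2x+1))/(2x)` is the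
power-series root of `x r² - (1+x-x²) r + 1 = 0` with `r(0) = 1`; stated after
multiplying through by `x³ r`.  For `m = -1` the series begins
`1 + 2x + 4x² + 8x³ + 17x⁴ + 37x⁵ + ⋯`. -/

noncomputable def rc : ℕ → ℚ
  | 0 => 1
  | (n+1) => (∑ i ∈ (Finset.range (n+1)).attach, rc i.1 * rc (n - i.1)) - rc n
      + (if n = 0 then 0 else rc (n-1))
decreasing_by
  all_goals first
    | omega
    | (have hi := Finset.mem_range.mp i.2; omega)

noncomputable def r : PowerSeries ℚ := PowerSeries.mk rc

lemma rc_succ (n : ℕ) : rc (n+1) = (∑ i ∈ Finset.range (n+1), rc i * rc (n - i)) - rc n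
      + (if n = 0 then 0 else rc (n-1)) := by
  rw [rc, ← Finset.sum_attach (Finset.range (n+1)) (fun i => rc i * rc (n - i))]

lemma constantCoeff_r : constantCoeff r = 1 := by
  simp [r, rc]

lemma hq : X * r ^ 2 - (1 + X - X ^ 2) * r + 1 = (0 : PowerSeries ℚ) := by
  ext n
  simp only [map_add, map_sub, map_mul, map_zero]
  rw [sq]
  rcases n with _ | n
  · simp [r, rc, PowerSeries.coeff_zero_eq_constantCoeff]
  · rw [PowerSeries.coeff_succ_X_mul]
    have hmul : (coeff n) (r * r) = ∑ i ∈ Finset.range (n+1), rc i * rc (n - i) := by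
      rw [PowerSeries.coeff_mul, Finset.Nat.sum_antidiagonal_eq_sum_range_succ
        (f := fun i j => (coeff i) r * (coeff j) r)]
      simp [r]
    rw [hmul]
    have h1 : (coeff (n+1)) ((1 + X - X^2) * r)
        = rc (n+1) + rc n - (if n = 0 then 0 else rc (n-1)) := by
      rw [sub_mul, add_mul, one_mul, map_sub, map_add, PowerSeries.coeff_succ_X_mul]
      rcases n with _ | m
      · simp [r, PowerSeries.coeff_X_pow_mul']
      · rw [pow_two, mul_assoc]
        have : (coeff (m+1+1)) (X * (X * r)) = rc m := by
          rw [PowerSeries.coeff_succ_X_mul, PowerSeries.coeff_succ_X_mul]; simp [r]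
        rw [this]
        simp [r]
    rw [h1, rc_succ]
    simp [PowerSeries.coeff_one]
    ring

def UpFirst (q : List ℤ) : Prop := q = [] ∨ ∃ t, q = (1:ℤ) :: t

def P : Bool → ℕ → ℕ → Finset (List ℤ)
  | _, _, 0 => {([] : List ℤ)}
  | false, h, (n+1) =>
      ((P false (h+1) n).image (List.cons (1:ℤ))) ∪
      (Finset.range h).biUnion (fun k => (P true (h - (k+1)) n).image (List.cons (-((k:ℤ)+1))))
  | true, h, (n+1) => (P false (h+1) n).image (List.cons (1:ℤ))

lemma goodSteps_nil : GoodSteps [] := ⟨by simp, List.isChain_nil⟩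

lemma goodSteps_cons_one (q : List ℤ) : GoodSteps ((1:ℤ) :: q) ↔ GoodSteps q := by
  unfold GoodSteps
  simp only [List.Chain']; rw [List.isChain_cons]
  constructor
  · rintro ⟨h1, h2, h3⟩
    exact ⟨fun s hs => h1 s (List.mem_cons_of_mem _ hs), h3⟩
  · rintro ⟨h1, h2⟩
    refine ⟨?_, fun b _ => Or.inl rfl, h2⟩
    intro s hs
    rcases List.mem_cons.mp hs with h | h
    · exact Or.inl h
    · exact h1 s h

lemma goodSteps_cons_neg (k : ℕ) (q : List ℤ) :
    GoodSteps ((-((k:ℤ)+1)) :: q) ↔ GoodSteps q ∧ UpFirst q := by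
  unfold GoodSteps
  simp only [List.Chain', List.isChain_cons]
  constructor
  · rintro ⟨h1, h2, h3⟩
    refine ⟨⟨fun s hs => h1 s (List.mem_cons_of_mem _ hs), h3⟩, ?_⟩
    cases q with
    | nil => exact Or.inl rfl
    | cons a t =>
      right
      have := h2 a rfl
      rcases this with h | h
      · exfalso; omega
      · exact ⟨t, by rw [h]⟩
  · rintro ⟨⟨h1, h2⟩, h3⟩
    refine ⟨?_, ?_, h2⟩
    · intro s hs
      rcases List.mem_cons.mp hs with h | h
      · right; omega
      · exact h1 s h
    · intro b hb
      rcases h3 with rfl | ⟨t, rfl⟩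
      · simp at hb
      · simp at hb; right; omega

lemma boundedBelow_nil (m : ℤ) : BoundedBelow m [] ↔ m ≤ 0 := by
  constructor
  · intro h; simpa using h 0
  · intro h i; simpa using h

lemma boundedBelow_cons (m s : ℤ) (q : List ℤ) :
    BoundedBelow m (s :: q) ↔ m ≤ 0 ∧ BoundedBelow (m - s) q := by
  constructor
  · intro h
    refine ⟨by simpa using h 0, fun i => ?_⟩
    have := h (i+1)
    simp only [List.take_succ_cons, List.sum_cons] at this
    omega
  · rintro ⟨h0, h⟩ i
    cases i with
    | zero => simpa using h0
    | succ i =>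
      have := h i
      simp only [List.take_succ_cons, List.sum_cons]
      omega

lemma mem_P : ∀ (n : ℕ) (b : Bool) (h : ℕ) (p : List ℤ),
    p ∈ P b h n ↔ GoodSteps p ∧ BoundedBelow (-(h:ℤ)) p ∧ p.length = n ∧ (b = true → UpFirst p) := by
  intro n
  induction n with
  | zero =>
    intro b h p
    have : P b h 0 = {([] : List ℤ)} := by cases b <;> rfl
    rw [this]
    simp only [Finset.mem_singleton]
    constructor
    · rintro rfl
      exact ⟨goodSteps_nil, (boundedBelow_nil _).mpr (by omega), rfl, fun _ => Or.inl rfl⟩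
    · rintro ⟨-, -, hl, -⟩
      exact List.length_eq_zero_iff.mp hl
  | succ n ih =>
    intro b h p
    cases b
    · -- false case
      show p ∈ ((P false (h+1) n).image (List.cons (1:ℤ))) ∪
        (Finset.range h).biUnion (fun k => (P true (h - (k+1)) n).image (List.cons (-((k:ℤ)+1)))) ↔ _
      rw [Finset.mem_union, Finset.mem_image]
      simp only [Finset.mem_biUnion, Finset.mem_range, Finset.mem_image]
      constructor
      · rintro (⟨q, hq, rfl⟩ | ⟨k, hk, q, hq, rfl⟩)
        · rw [ih] at hq
          obtain ⟨g1, g2, g3, -⟩ := hq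
          refine ⟨(goodSteps_cons_one q).mpr g1, ?_, by simp [g3], by simp⟩
          rw [boundedBelow_cons]
          constructor
          · omega
          · have : (-(h:ℤ) - 1) = -((h:ℕ)+1 : ℕ) := by push_cast; ring
            rw [this]; exact g2
        · rw [ih] at hq
          obtain ⟨g1, g2, g3, g4⟩ := hq
          refine ⟨(goodSteps_cons_neg k q).mpr ⟨g1, g4 rfl⟩, ?_, by simp [g3], by simp⟩
          rw [boundedBelow_cons]
          constructor
          · omega
          · have : (-(h:ℤ) - (-((k:ℤ)+1))) = -((h - (k+1) : ℕ) : ℤ) := by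
              have : (k:ℤ) + 1 ≤ h := by exact_mod_cast hk
              push_cast [Nat.cast_sub (by omega : k+1 ≤ h)]
              ring
            rw [this]; exact g2
      · rintro ⟨g1, g2, g3, -⟩
        cases p with
        | nil => simp at g3
        | cons s q =>
          have hsq : s = 1 ∨ s ≤ -1 := g1.1 s (List.mem_cons_self)
          rw [boundedBelow_cons] at g2
          obtain ⟨-, g2'⟩ := g2
          rcases hsq with rfl | hs
          · left
            refine ⟨q, ?_, rfl⟩
            rw [ih]
            refine ⟨(goodSteps_cons_one q).mp g1, ?_, by simpa using g3, by simp⟩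
            have : -((h:ℕ)+1 : ℕ) = (-(h:ℤ) - 1 : ℤ) := by push_cast; ring
            rw [this]; exact g2'
          · right
            set k : ℕ := (-s - 1).toNat with hk
            have hsk : s = -((k:ℤ)+1) := by simp [hk]; omega
            have hkh : k < h := by
              have h0 := g2' 0
              simp at h0
              omega
            refine ⟨k, hkh, q, ?_, by rw [hsk]⟩
            rw [ih]
            rw [hsk] at g1
            obtain ⟨gq, gu⟩ := (goodSteps_cons_neg k q).mp g1
            refine ⟨gq, ?_, by simpa using g3, fun _ => gu⟩
            have : -((h - (k+1) : ℕ) : ℤ) = -(h:ℤ) - s := by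
              push_cast [Nat.cast_sub (by omega : k+1 ≤ h)]
              omega
            rw [this]; exact g2'
    · -- true case
      show p ∈ (P false (h+1) n).image (List.cons (1:ℤ)) ↔ _
      rw [Finset.mem_image]
      constructor
      · rintro ⟨q, hq, rfl⟩
        rw [ih] at hq
        obtain ⟨g1, g2, g3, -⟩ := hq
        refine ⟨(goodSteps_cons_one q).mpr g1, ?_, by simp [g3], fun _ => Or.inr ⟨q, rfl⟩⟩
        rw [boundedBelow_cons]
        refine ⟨by omega, ?_⟩
        have : (-(h:ℤ) - 1) = -((h:ℕ)+1 : ℕ) := by push_cast; ring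
        rw [this]; exact g2
      · rintro ⟨g1, g2, g3, g4⟩
        rcases g4 rfl with rfl | ⟨t, rfl⟩
        · simp at g3
        · refine ⟨t, ?_, rfl⟩
          rw [ih]
          rw [boundedBelow_cons] at g2
          refine ⟨(goodSteps_cons_one t).mp g1, ?_, by simpa using g3, by simp⟩
          have : -((h:ℕ)+1 : ℕ) = (-(h:ℤ) - 1 : ℤ) := by push_cast; ring
          rw [this]; exact g2.2

lemma cons_inj (a : ℤ) : Function.Injective (List.cons a) := fun x y hxy => by
  simpa using hxy

lemma card_P_true (h n : ℕ) : (P true h (n+1)).card = (P false (h+1) n).card := by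
  show ((P false (h+1) n).image (List.cons (1:ℤ))).card = _
  exact Finset.card_image_of_injective _ (cons_inj 1)

lemma card_P_false (h n : ℕ) : (P false h (n+1)).card
    = (P false (h+1) n).card + ∑ k ∈ Finset.range h, (P true (h - (k+1)) n).card := by
  show (((P false (h+1) n).image (List.cons (1:ℤ))) ∪
      (Finset.range h).biUnion (fun k => (P true (h - (k+1)) n).image (List.cons (-((k:ℤ)+1))))).card = _
  rw [Finset.card_union_of_disjoint, Finset.card_biUnion,
    Finset.card_image_of_injective _ (cons_inj 1)]
  · congr 1
    exact Finset.sum_congr rfl fun k _ => Finset.card_image_of_injective _ (cons_inj _)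
  · intro k _ k' _ hkk'
    rw [Function.onFun, Finset.disjoint_left]
    rintro p hp hp'
    rw [Finset.mem_image] at hp hp'
    obtain ⟨q, -, rfl⟩ := hp
    obtain ⟨q', -, he⟩ := hp'
    apply hkk'
    have : -((k:ℤ)+1) = -((k':ℤ)+1) := by
      have := List.head_eq_of_cons_eq he.symm
      omega
    omega
  · rw [Finset.disjoint_left]
    rintro p hp hp'
    rw [Finset.mem_image] at hp
    rw [Finset.mem_biUnion] at hp'
    obtain ⟨q, -, rfl⟩ := hp
    obtain ⟨k, -, hk⟩ := hp'
    rw [Finset.mem_image] at hk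
    obtain ⟨q', -, he⟩ := hk
    have := List.head_eq_of_cons_eq he
    omega

noncomputable def A (h : ℕ) : PowerSeries ℚ := PowerSeries.mk fun n => ((P false h n).card : ℚ)
noncomputable def Bs (h : ℕ) : PowerSeries ℚ := PowerSeries.mk fun n => ((P true h n).card : ℚ)

lemma Bs_eq (h : ℕ) : Bs h = 1 + X * A (h+1) := by
  ext n
  rcases n with _ | n
  · simp [Bs, P]
  · rw [map_add, PowerSeries.coeff_succ_X_mul]
    simp only [Bs, A, PowerSeries.coeff_mk, PowerSeries.coeff_one, Nat.succ_ne_zero, if_false]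
    rw [card_P_true]
    ring

lemma A_rec (h : ℕ) : A h = 1 + X * A (h+1) + X * ∑ k ∈ Finset.range h, Bs (h - (k+1)) := by
  ext n
  rcases n with _ | n
  · simp [A, P]
  · rw [map_add, map_add, PowerSeries.coeff_succ_X_mul, PowerSeries.coeff_succ_X_mul, map_sum]
    simp only [A, Bs, PowerSeries.coeff_mk, PowerSeries.coeff_one, Nat.succ_ne_zero, if_false]
    rw [card_P_false]
    push_cast; ring

lemma A_master (h : ℕ) : A h = 1 + X * A (h+1) + (h : PowerSeries ℚ) * X
    + X^2 * ∑ j ∈ Finset.range h, A (j+1) := by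
  rw [A_rec h]
  have h1 : ∑ k ∈ Finset.range h, Bs (h - (k+1)) = ∑ j ∈ Finset.range h, Bs j := by
    have := Finset.sum_range_reflect (fun j => Bs j) h
    rw [← this]
    exact Finset.sum_congr rfl fun k hk => by rw [Nat.sub_sub, Nat.add_comm 1 k]
  rw [h1]
  have h2 : ∑ j ∈ Finset.range h, Bs j
      = (h : PowerSeries ℚ) + X * ∑ j ∈ Finset.range h, A (j+1) := by
    calc ∑ j ∈ Finset.range h, Bs j = ∑ j ∈ Finset.range h, (1 + X * A (j+1)) :=
          Finset.sum_congr rfl fun j _ => Bs_eq j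
      _ = _ := by
        rw [Finset.sum_add_distrib, Finset.sum_const, Finset.card_range, ← Finset.mul_sum]
        simp [nsmul_eq_mul]
  rw [h2]
  ring

noncomputable def T (h : ℕ) : PowerSeries ℚ := r^(h+1) - r^h - X^2 * r

lemma sum_T (h : ℕ) : ∑ j ∈ Finset.range h, T (j+1)
    = r^(h+1) - r - (h : PowerSeries ℚ) * (X^2 * r) := by
  have h1 : ∑ j ∈ Finset.range h, (r^(j+1+1) - r^(j+1)) = r^(h+1) - r^(0+1) :=
    Finset.sum_range_sub (fun j => r^(j+1)) h
  calc ∑ j ∈ Finset.range h, T (j+1)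
      = ∑ j ∈ Finset.range h, ((r^(j+1+1) - r^(j+1)) - X^2*r) := rfl
    _ = _ := by
        rw [Finset.sum_sub_distrib, h1, Finset.sum_const, Finset.card_range, nsmul_eq_mul]
        ring

lemma T_rec (h : ℕ) : T h = X^3*r + X * T (h+1) + (h : PowerSeries ℚ) * X^4 * r
    + X^2 * ∑ j ∈ Finset.range h, T (j+1) := by
  rw [sum_T]
  simp only [T]
  linear_combination (-(r^h)) * hq

lemma E_rec (h : ℕ) : A h * X^3 * r - T h
    = X * ((A (h+1) * X^3 * r - T (h+1))
        + X * ∑ j ∈ Finset.range h, (A (j+1) * X^3 * r - T (j+1))) := by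
  have hs : ∑ j ∈ Finset.range h, (A (j+1) * X^3 * r - T (j+1))
      = (∑ j ∈ Finset.range h, A (j+1)) * X^3 * r - ∑ j ∈ Finset.range h, T (j+1) := by
    rw [Finset.sum_sub_distrib, Finset.sum_mul, Finset.sum_mul]
  rw [hs]
  have h1 := A_master h
  have h2 := T_rec h
  linear_combination (X^3*r) * h1 - h2

lemma E_zero : ∀ n : ℕ, ∀ h : ℕ, coeff n (A h * X^3 * r - T h) = 0 := by
  intro n
  induction n using Nat.strong_induction_on with
  | _ n ih =>
    intro h
    rw [E_rec h]
    rcases n with _ | n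
    · simp
    · rw [PowerSeries.coeff_succ_X_mul, map_add]
      rw [ih n (by omega) (h+1), zero_add]
      rcases n with _ | n
      · simp
      · rw [PowerSeries.coeff_succ_X_mul, map_sum]
        exact Finset.sum_eq_zero fun j _ => ih n (by omega) (j+1)

lemma A_T (h : ℕ) : A h * X^3 * r = T h := by
  ext n
  rw [← sub_eq_zero, ← map_sub]
  exact E_zero n h

lemma partialCount_eq (m : ℤ) (hm : m ≤ 0) (n : ℕ) :
    partialCount m n = (P false m.natAbs n).card := by
  have hmm : m = -(m.natAbs : ℤ) := by omega
  unfold partialCount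
  have e : {p : List ℤ // GoodSteps p ∧ BoundedBelow m p ∧ p.length = n}
      ≃ {p // p ∈ P false m.natAbs n} :=
    Equiv.subtypeEquivRight fun p => by
      rw [mem_P]
      constructor
      · rintro ⟨g1, g2, g3⟩
        exact ⟨g1, by rwa [← hmm], g3, by simp⟩
      · rintro ⟨g1, g2, g3, -⟩
        exact ⟨g1, by rwa [← hmm] at g2, g3⟩
  rw [Nat.card_congr e]; exact Nat.card_eq_finsetCard _

lemma partialSeries_eq (m : ℤ) (hm : m ≤ 0) : partialSeries m = A m.natAbs := by
  ext n
  simp [partialSeries, A, partialCount_eq m hm n]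

theorem stmt9 :
    (∀ m : ℤ, m ≤ 0 →
      ∃ r : PowerSeries ℚ, constantCoeff r = 1 ∧
        X * r ^ 2 - (1 + X - X ^ 2) * r + 1 = 0 ∧
        partialSeries m * X ^ 3 * r =
          r ^ (m.natAbs + 1) - r ^ m.natAbs - X ^ 2 * r) ∧
    partialCount (-1) 0 = 1 ∧ partialCount (-1) 1 = 2 ∧ partialCount (-1) 2 = 4 ∧
    partialCount (-1) 3 = 8 ∧ partialCount (-1) 4 = 17 ∧ partialCount (-1) 5 = 37 := by
  constructor
  · intro m hm
    refine ⟨r, constantCoeff_r, hq, ?_⟩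
    rw [partialSeries_eq m hm, A_T]
    rfl
  · have h1 : (-1 : ℤ).natAbs = 1 := rfl
    refine ⟨?_, ?_, ?_, ?_, ?_, ?_⟩ <;>
      (rw [partialCount_eq (-1) (by omega), h1]; decide)
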